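/- Let X be countable with a distinguished state ℓ ∈ X, q(y|x,a) ≥ 0 transition rates, c bounded costs, and μ : X → [1, K*] a function satisfying μ(x) ≥ 1 + Σ_{y ≠ ℓ} q(y|x,a)μ(y) for all x ∈ X, a ∈ A(x). Fix β̄ ∈ [(K*−1)/K*, 1) and define on X̄ = X ∪ {x̄}: c̄(x,a) = c(x,a)/μ(x), p̄(y|x,a) = q(y|x,a)μ(y)/(β̄μ(x)) for y ∈ X∖{ℓ}, p̄(ℓ|x,a) = [μ(x) − 1 − Σ_{y≠ℓ} q(y|x,a)μ(y)]/(β̄μ(x)), and p̄(x̄|x,a) = 1 − (μ(x)−1)/(β̄μ(x)). Then for any bounded f : X̄ → ℝ with f(x̄) = 0, and for any x ∈ X, a ∈ A(x): c̄(x,a) + β̄ Σ_{y∈X̄} p̄(y|x,a) f(y) = (1/μ(x)) [ c(x,a) + Σ_{y∈X} q(y|x,a)μ(y)(f(y) − f(ℓ)) + (μ(x)−1) f(ℓ) ]. -/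
import Mathlib


/-- Lemma 1, HV-AG transformation: for any bounded `f : X̄ → ℝ` with
`f(x̄) = 0`, and any `x ∈ X`, `a ∈ A(x)`,
`c̄(x,a) + β̄ ∑_{y∈X̄} p̄(y|x,a) f(y)
  = (1/μ(x)) [c(x,a) + ∑_{y∈X} q(y|x,a)μ(y)(f(y) − f(ℓ)) + (μ(x)−1) f(ℓ)]`. -/
theorem stmt6 {X A : Type*} [Countable X] [DecidableEq X] (ℓ : X)
    (q : X → A → X → ℝ) (hq0 : ∀ x a y, 0 ≤ q x a y) (hqs : ∀ x a, Summable (q x a))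
    (c : X → A → ℝ) (Cc : ℝ) (hc : ∀ x a, |c x a| ≤ Cc)
    (K : ℝ) (hK : 1 ≤ K)
    (μ : X → ℝ) (hμ1 : ∀ x, 1 ≤ μ x) (hμK : ∀ x, μ x ≤ K)
    (hμ : ∀ x a, 1 + ∑' y, (if y = ℓ then 0 else q x a y * μ y) ≤ μ x)
    (β : ℝ) (hβl : (K - 1) / K ≤ β) (hβu : β < 1)
    (f : Option X → ℝ) (Cf : ℝ) (hf : ∀ y, |f y| ≤ Cf) (hf0 : f none = 0) :
    ∀ (x : X) (a : A),
      letI pb : Option X → ℝ := fun y =>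
        match y with
        | some y =>
            if y = ℓ then
              (μ x - 1 - ∑' z, (if z = ℓ then 0 else q x a z * μ z)) / (β * μ x)
            else q x a y * μ y / (β * μ x)
        | none => 1 - (μ x - 1) / (β * μ x)
      c x a / μ x + β * ∑' y : Option X, pb y * f y
        = (1 / μ x) *
            (c x a + (∑' y : X, q x a y * μ y * (f (some y) - f (some ℓ)))
              + (μ x - 1) * f (some ℓ)) := by
  intro x a
  have hμx : (0:ℝ) < μ x := lt_of_lt_of_le one_pos (hμ1 x)
  have hβ0 : 0 ≤ β := le_trans (div_nonneg (by linarith) (by linarith)) hβl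
  -- summability facts
  have hqμ0 : ∀ y, 0 ≤ q x a y * μ y := fun y =>
    mul_nonneg (hq0 x a y) (le_trans zero_le_one (hμ1 y))
  have hs1 : Summable (fun y => q x a y * μ y) := by
    refine Summable.of_nonneg_of_le hqμ0 (fun y => ?_) ((hqs x a).mul_right K)
    exact mul_le_mul_of_nonneg_left (hμK y) (hq0 x a y)
  have hs2 : Summable (fun y => q x a y * μ y * f (some y)) := by
    refine Summable.of_abs ?_
    refine Summable.of_nonneg_of_le (fun y => abs_nonneg _) (fun y => ?_) (hs1.mul_right Cf)
    rw [abs_mul, abs_of_nonneg (hqμ0 y)]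
    exact mul_le_mul_of_nonneg_left (hf (some y)) (hqμ0 y)
  have hs3 : Summable (fun y => if y = ℓ then (0:ℝ) else q x a y * μ y) := by
    refine Summable.of_nonneg_of_le (fun y => ?_) (fun y => ?_) hs1
    · split <;> simp [hqμ0]
    · split <;> simp [hqμ0]
  set S : ℝ := ∑' z, (if z = ℓ then (0:ℝ) else q x a z * μ z) with hS
  set T : ℝ := ∑' y, q x a y * μ y * f (some y) with hT
  set Sf : ℝ := ∑' y, q x a y * μ y with hSf
  have hS0 : 0 ≤ S := tsum_nonneg (fun y => by split <;> simp [hqμ0])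
  -- key sum decomposition: Sf = S + q x a ℓ * μ ℓ
  have hSfS : Sf = S + q x a ℓ * μ ℓ := by
    have : ∀ y, q x a y * μ y
        = (if y = ℓ then (0:ℝ) else q x a y * μ y) + (if y = ℓ then q x a ℓ * μ ℓ else 0) := by
      intro y; by_cases h : y = ℓ <;> simp [h]
    rw [hSf, tsum_congr this, Summable.tsum_add hs3 ?_, tsum_ite_eq]
    exact summable_of_ne_finset_zero (s := {ℓ}) (fun b hb => by
      simp at hb; simp [hb])
  -- RHS middle sum
  have hmid : (∑' y : X, q x a y * μ y * (f (some y) - f (some ℓ))) = T - Sf * f (some ℓ) := by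
    have : ∀ y, q x a y * μ y * (f (some y) - f (some ℓ))
        = q x a y * μ y * f (some y) - q x a y * μ y * f (some ℓ) := fun y => by ring
    rw [tsum_congr this, Summable.tsum_sub hs2 (hs1.mul_right _), tsum_mul_right]
  rcases eq_or_lt_of_le hβ0 with hβz | hβpos
  · -- degenerate case β = 0 forces K = 1, μ ≡ 1, and the off-ℓ rates vanish
    have hK1 : K = 1 := by
      have : (K - 1) / K ≤ 0 := hβl.trans_eq hβz.symm
      have hKpos : (0:ℝ) < K := by linarith
      have h1 : K - 1 ≤ 0 := by
        have h2 := mul_le_mul_of_nonneg_right this (le_of_lt hKpos)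
        rwa [div_mul_cancel₀ _ (ne_of_gt hKpos), zero_mul] at h2
      linarith
    have hμ1' : ∀ y, μ y = 1 := fun y => le_antisymm (by rw [← hK1]; exact hμK y) (hμ1 y)
    have hSz : S = 0 := le_antisymm (by have := hμ x a; rw [← hS] at this; linarith [hμ1' x]) hS0
    have hterm : ∀ y, y ≠ ℓ → q x a y = 0 := by
      intro y hy
      have hle : (if y = ℓ then (0:ℝ) else q x a y * μ y) ≤ S :=
        Summable.le_tsum hs3 y (fun z _ => by split <;> simp [hqμ0])
      rw [if_neg hy, hμ1' y, mul_one] at hle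
      exact le_antisymm (by rw [hSz] at hle; linarith) (hq0 x a y)
    have hmidz : (∑' y : X, q x a y * μ y * (f (some y) - f (some ℓ))) = 0 := by
      have hz : ∀ y : X, q x a y * μ y * (f (some y) - f (some ℓ)) = 0 := by
        intro y
        by_cases h : y = ℓ
        · simp [h]
        · simp [hterm y h]
      rw [tsum_congr hz, tsum_zero]
    rw [← hβz, hmidz, hμ1' x]
    simp
  · -- main case β > 0
    have hβμ : β * μ x ≠ 0 := ne_of_gt (mul_pos hβpos hμx)
    set pb : Option X → ℝ := fun y =>
        match y with
        | some y =>
            if y = ℓ then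
              (μ x - 1 - ∑' z, (if z = ℓ then 0 else q x a z * μ z)) / (β * μ x)
            else q x a y * μ y / (β * μ x)
        | none => 1 - (μ x - 1) / (β * μ x) with hpb
    have hcomp : ∀ y : X, (fun z => pb z * f z) (some y)
        = (if y = ℓ then (μ x - 1 - S) * f (some ℓ) else q x a y * μ y * f (some y)) / (β * μ x) := by
      intro y
      by_cases h : y = ℓ <;> simp [hpb, h, div_mul_eq_mul_div, ← hS]
    have hsum_inner : Summable (fun y : X =>
        if y = ℓ then (μ x - 1 - S) * f (some ℓ) else q x a y * μ y * f (some y)) := by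
      have : ∀ y, (if y = ℓ then (μ x - 1 - S) * f (some ℓ) else q x a y * μ y * f (some y))
          = q x a y * μ y * f (some y)
            + (if y = ℓ then (μ x - 1 - S) * f (some ℓ) - q x a ℓ * μ ℓ * f (some ℓ) else 0) := by
        intro y
        split_ifs with h
        · subst h; ring
        · ring
      exact (hs2.add (summable_of_ne_finset_zero (s := {ℓ}) (fun b hb => by
        simp at hb; simp [hb]))).congr (fun y => (this y).symm)
    have hOpt : (∑' y : Option X, pb y * f y)
        = ∑' y : X, (if y = ℓ then (μ x - 1 - S) * f (some ℓ)
            else q x a y * μ y * f (some y)) / (β * μ x) := by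
      rw [← tsum_congr hcomp]
      refine (Function.Injective.tsum_eq (Option.some_injective X) ?_).symm
      intro z hz
      rcases z with _ | z
      · simp [hpb, hf0] at hz
      · exact ⟨z, rfl⟩
    have hinner : (∑' y : X, (if y = ℓ then (μ x - 1 - S) * f (some ℓ)
          else q x a y * μ y * f (some y)) / (β * μ x))
        = ((μ x - 1 - S) * f (some ℓ) - q x a ℓ * μ ℓ * f (some ℓ) + T) / (β * μ x) := by
      rw [tsum_div_const]
      congr 1
      have : ∀ y, (if y = ℓ then (μ x - 1 - S) * f (some ℓ) else q x a y * μ y * f (some y))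
          = (if y = ℓ then (μ x - 1 - S) * f (some ℓ) - q x a ℓ * μ ℓ * f (some ℓ) else 0)
            + q x a y * μ y * f (some y) := by
        intro y
        split_ifs with h
        · subst h; ring
        · ring
      rw [tsum_congr this, Summable.tsum_add (summable_of_ne_finset_zero (s := {ℓ})
        (fun b hb => by simp at hb; simp [hb])) hs2, tsum_ite_eq]
    rw [hOpt, hinner, hmid, hSfS]
    field_simp
    ring
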